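/- Let ρ ∈ (0,1) and f_∞(z) = −z/ρ² + log(z+ρ) − ((1−ρ)²/ρ²) log(1−ρ−z). Along the ray z = t e^{−iπ/3}, t ∈ (0, 2(1−ρ)], the derivative of Re f_∞ with respect to t equals −t²(2ρ(1−ρ) + t(1−2ρ) + t²) / [2ρ²(ρ² + ρt + t²)((1−ρ−t)² + t(1−ρ))], and this is strictly negative; hence Re f_∞ is strictly decreasing along the ray. -/

import Mathlib

open Complex Set

/-- Let `ρ ∈ (0,1)` and
`f_∞(z) = −z/ρ² + log(z+ρ) − ((1−ρ)²/ρ²) log(1−ρ−z)`. Along the ray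
`z = t e^{−iπ/3}`, `t ∈ (0, 2(1−ρ)]`, the derivative of `Re f_∞` in `t` equals
`−t²(2ρ(1−ρ) + t(1−2ρ) + t²) / [2ρ²(ρ² + ρt + t²)((1−ρ−t)² + t(1−ρ))]`,
which is strictly negative; hence `Re f_∞` is strictly decreasing on the ray. -/
theorem finfty_steep_descent_ray (ρ : ℝ) (h0 : 0 < ρ) (h1 : ρ < 1)
    (f : ℂ → ℂ)
    (hf : ∀ z : ℂ, f z = -z / (ρ : ℂ) ^ 2 + Complex.log (z + ρ)
      - (((1 : ℂ) - ρ) ^ 2 / (ρ : ℂ) ^ 2) * Complex.log (1 - ρ - z))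
    (g : ℝ → ℝ)
    (hg : ∀ t : ℝ, g t = (f (t * Complex.exp (-(Real.pi / 3 : ℝ) * Complex.I))).re) :
    (∀ t ∈ Ioc (0 : ℝ) (2 * (1 - ρ)),
      deriv g t
        = -(t ^ 2 * (2 * ρ * (1 - ρ) + t * (1 - 2 * ρ) + t ^ 2)) /
            (2 * ρ ^ 2 * (ρ ^ 2 + ρ * t + t ^ 2) * ((1 - ρ - t) ^ 2 + t * (1 - ρ)))
        ∧ deriv g t < 0) ∧
    StrictAntiOn g (Ioc (0 : ℝ) (2 * (1 - ρ))) := by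
  -- Step 1: a real formula for g
  have hgG : ∀ t : ℝ, g t = -t/(2*ρ^2) + (1/2)*Real.log (ρ^2+ρ*t+t^2)
      - ((1-ρ)^2/(2*ρ^2))*Real.log ((1-ρ)^2-(1-ρ)*t+t^2) := by
    set E := Complex.exp (-(Real.pi / 3 : ℝ) * Complex.I) with hE
    have hEe : (-(Real.pi / 3 : ℝ) * Complex.I : ℂ) = ((-(Real.pi/3) : ℝ) : ℂ) * Complex.I := by
      push_cast; ring
    have hEre : E.re = 1/2 := by
      rw [hE, hEe, Complex.exp_ofReal_mul_I_re, Real.cos_neg, Real.cos_pi_div_three]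
    have hEim : E.im = -(Real.sqrt 3/2) := by
      rw [hE, hEe, Complex.exp_ofReal_mul_I_im, Real.sin_neg, Real.sin_pi_div_three]
    have h3 : Real.sqrt 3 ^ 2 = 3 := Real.sq_sqrt (by norm_num)
    intro t
    rw [hg, hf]
    have hwre : ((t:ℂ) * E).re = t/2 := by
      simp [Complex.mul_re, hEre, hEim]; ring
    have hwim : ((t:ℂ) * E).im = -(t * Real.sqrt 3/2) := by
      simp [Complex.mul_im, hEre, hEim]; ring
    have hA : Complex.normSq ((t:ℂ)*E + ρ) = ρ^2+ρ*t+t^2 := by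
      rw [Complex.normSq_apply]
      simp [hwre, hwim]
      nlinarith [h3]
    have hB : Complex.normSq (1 - (ρ:ℂ) - (t:ℂ)*E) = (1-ρ)^2-(1-ρ)*t+t^2 := by
      rw [Complex.normSq_apply]
      simp [hwre, hwim]
      nlinarith [h3]
    have hc : ((1:ℂ)-ρ)^2/(ρ:ℂ)^2 = (((1-ρ)^2/ρ^2 : ℝ):ℂ) := by push_cast; ring
    rw [Complex.sub_re, Complex.add_re, hc]
    rw [Complex.re_ofReal_mul]
    rw [Complex.log_re, Complex.log_re, Complex.norm_def, Complex.norm_def, hA, hB,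
      Real.log_sqrt (by nlinarith), Real.log_sqrt (by nlinarith)]
    have hd : (-((t:ℂ)*E) / (ρ:ℂ)^2).re = -(t/2) / ρ^2 := by
      have : ((ρ:ℂ)^2) = ((ρ^2 : ℝ):ℂ) := by push_cast; ring
      rw [this, Complex.div_ofReal_re, Complex.neg_re, hwre]
    rw [hd]
    ring
  have hρ : (ρ:ℝ) ≠ 0 := h0.ne'
  -- Step 2: pointwise derivative for t > 0
  have hder : ∀ t : ℝ, 0 < t → HasDerivAt g
      (-1/(2*ρ^2) + (1/2)*((ρ+2*t)/(ρ^2+ρ*t+t^2))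
        - ((1-ρ)^2/(2*ρ^2))*((2*t-(1-ρ))/((1-ρ)^2-(1-ρ)*t+t^2))) t := by
    intro t ht
    have hA' : 0 < ρ^2+ρ*t+t^2 := by nlinarith
    have hB' : 0 < (1-ρ)^2-(1-ρ)*t+t^2 := by nlinarith [sq_nonneg (1-ρ-t), mul_pos ht (sub_pos.2 h1)]
    have hq1 : HasDerivAt (fun s : ℝ => ρ^2+ρ*s+s^2) (ρ+2*t) t := by
      have h := ((hasDerivAt_const t (ρ^2)).add ((hasDerivAt_id t).const_mul ρ)).add
        (hasDerivAt_pow 2 t)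
      convert h using 1
      · rfl
      · rfl
      · ext s; simp only [Pi.add_apply, id_eq]
      · push_cast; ring
    have hq2 : HasDerivAt (fun s : ℝ => (1-ρ)^2-(1-ρ)*s+s^2) (2*t-(1-ρ)) t := by
      have h := (((hasDerivAt_id t).const_mul (-(1-ρ))).const_add ((1-ρ)^2)).add
        (hasDerivAt_pow 2 t)
      convert h using 1
      · rfl
      · rfl
      · ext s; simp only [Pi.add_apply, id_eq]; ring
      · push_cast; ring
    have hlog1 := hq1.log hA'.ne'
    have hlog2 := hq2.log hB'.ne'
    have hlin : HasDerivAt (fun s : ℝ => -s/(2*ρ^2)) (-1/(2*ρ^2)) t := by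
      have h := (hasDerivAt_id t).const_mul (-1/(2*ρ^2))
      convert h using 1
      · rfl
      · rfl
      · ext s; simp only [id_eq]; ring
      · try simp only [id_eq]
        try ring
    have hD := (hlin.add (hlog1.const_mul (1/2))).sub (hlog2.const_mul ((1-ρ)^2/(2*ρ^2)))
    have hfun : g = fun s : ℝ => -s/(2*ρ^2) + (1/2)*Real.log (ρ^2+ρ*s+s^2)
        - ((1-ρ)^2/(2*ρ^2))*Real.log ((1-ρ)^2-(1-ρ)*s+s^2) := funext hgG
    rw [hfun]
    convert hD using 1
    · rfl
    · rfl
    · rfl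
    try ring
  -- Step 3: the derivative formula and negativity on the interval
  have hmain : ∀ t ∈ Ioc (0 : ℝ) (2 * (1 - ρ)),
      deriv g t
        = -(t ^ 2 * (2 * ρ * (1 - ρ) + t * (1 - 2 * ρ) + t ^ 2)) /
            (2 * ρ ^ 2 * (ρ ^ 2 + ρ * t + t ^ 2) * ((1 - ρ - t) ^ 2 + t * (1 - ρ)))
        ∧ deriv g t < 0 := by
    intro t ⟨ht, ht2⟩
    have hA' : 0 < ρ^2+ρ*t+t^2 := by nlinarith
    have hB' : 0 < (1-ρ)^2-(1-ρ)*t+t^2 := by nlinarith [sq_nonneg (1-ρ-t), mul_pos ht (sub_pos.2 h1)]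
    have hBeq : (1 - ρ - t) ^ 2 + t * (1 - ρ) = (1-ρ)^2-(1-ρ)*t+t^2 := by ring
    have hP : 0 < 2*ρ*(1-ρ) + t*(1-2*ρ) + t^2 := by
      nlinarith [sq_nonneg (t - ρ), sq_nonneg (t - (1-ρ)), mul_nonneg (sub_nonneg.2 ht2) ht.le,
        mul_nonneg (sub_nonneg.2 ht2) h0.le, mul_pos ht h0, sq_nonneg (2*t - ρ), sq_nonneg t,
        mul_nonneg (mul_nonneg (sub_nonneg.2 ht2) ht.le) h0.le, sq_nonneg (t + 2*ρ - 1)]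
    have hdg := (hder t ht).deriv
    have heq : deriv g t
        = -(t ^ 2 * (2 * ρ * (1 - ρ) + t * (1 - 2 * ρ) + t ^ 2)) /
            (2 * ρ ^ 2 * (ρ ^ 2 + ρ * t + t ^ 2) * ((1 - ρ - t) ^ 2 + t * (1 - ρ))) := by
      rw [hdg, hBeq, eq_div_iff (by positivity)]
      generalize hBv : (1-ρ)^2-(1-ρ)*t+t^2 = B at hB' ⊢
      field_simp
      subst hBv
      ring
    refine ⟨heq, ?_⟩
    rw [heq]
    apply div_neg_of_neg_of_pos
    · have : 0 < t ^ 2 * (2 * ρ * (1 - ρ) + t * (1 - 2 * ρ) + t ^ 2) :=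
        mul_pos (by positivity) hP
      linarith
    · rw [hBeq]
      positivity
  refine ⟨hmain, ?_⟩
  -- Step 4: strict antitonicity
  apply strictAntiOn_of_deriv_neg (convex_Ioc _ _)
  · intro x hx
    exact ((hder x hx.1).continuousAt).continuousWithinAt
  · intro x hx
    rw [interior_Ioc] at hx
    exact (hmain x ⟨hx.1, hx.2.le⟩).2
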